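/- For every odd integer n ≥ 5, no enumeration of the vertices of the cycle C_n is special; consequently, for all integers m ≥ n+4, the path-chromatic number of R_m(C_n) equals 3. -/

import Mathlib

open SimpleGraph

universe u
variable {V : Type u}

/-- Closed neighborhood of a vertex set. -/
def closedNbhd (G : SimpleGraph V) (U : Set V) : Set V :=
  U ∪ {v | ∃ u ∈ U, G.Adj u v}

/-- Bag `X_ℓ = N[{v_1,…,v_ℓ}] \ {v_1,…,v_{ℓ-1}}` of the enumeration `σ`. -/
def bagX {n : ℕ} (G : SimpleGraph V) (σ : Fin n ≃ V) (ℓ : Fin n) : Set V :=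
  closedNbhd G {v | ∃ j ≤ ℓ, v = σ j} \ {v | ∃ j < ℓ, v = σ j}

/-- Chromatic number of the subgraph induced by `S`. -/
noncomputable def chrom (G : SimpleGraph V) (S : Set V) : ℕ :=
  sInf {k | (G.induce S).Colorable k}

/-- Chromatic number of the path-decomposition `P_σ^G`. -/
noncomputable def decompChrom {n : ℕ} (G : SimpleGraph V) (σ : Fin n ≃ V) : ℕ :=
  sInf {k | ∀ ℓ, (G.induce (bagX G σ ℓ)).Colorable k}

/-- `B` is a path-decomposition of `G`. -/
def IsPathDecomp (G : SimpleGraph V) {s : ℕ} (B : Fin s → Set V) : Prop :=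
  (∀ v, ∃ t, v ∈ B t) ∧
  (∀ u v, G.Adj u v → ∃ t, u ∈ B t ∧ v ∈ B t) ∧
  (∀ v (t₁ t₂ t₃ : Fin s), t₁ ≤ t₂ → t₂ ≤ t₃ → v ∈ B t₁ → v ∈ B t₃ → v ∈ B t₂)

/-- Path-chromatic number. -/
noncomputable def pathChromatic (G : SimpleGraph V) : ℕ :=
  sInf {k | ∃ (s : ℕ) (B : Fin s → Set V), IsPathDecomp G B ∧
    ∀ t, (G.induce (B t)).Colorable k}

/-- `(T, B)` is a tree-decomposition of `G`. -/
def IsTreeDecomp {ι : Type u} (G : SimpleGraph V) (T : SimpleGraph ι) (B : ι → Set V) : Prop :=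
  T.IsTree ∧
  (∀ v, ∃ t, v ∈ B t) ∧
  (∀ u v, G.Adj u v → ∃ t, u ∈ B t ∧ v ∈ B t) ∧
  (∀ v, (T.induce {t | v ∈ B t}).Connected)

/-- Tree-chromatic number. -/
noncomputable def treeChromatic (G : SimpleGraph V) : ℕ :=
  sInf {k | ∃ (ι : Type u) (T : SimpleGraph ι) (B : ι → Set V),
    IsTreeDecomp G T B ∧ ∀ t, (G.induce (B t)).Colorable k}

/-- A special enumeration. -/
def IsSpecial {n : ℕ} (G : SimpleGraph V) (σ : Fin n ≃ V) : Prop :=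
  decompChrom G σ = pathChromatic G ∧
  ∀ i : Fin n, chrom G (bagX G σ i) = pathChromatic G →
    ∀ j : Fin n, j < i → ¬ G.Adj (σ j) (σ i)

/-- The graph `R_m(G)`; the vertex `(i, none)` plays the role of `(i, v₀)`. -/
def Rm (G : SimpleGraph V) (m : ℕ) : SimpleGraph (Fin m × Option V) :=
  SimpleGraph.fromRel (fun p q =>
    (p.1 = q.1 ∧ p.2 = none) ∨
    (p.1 ≠ q.1 ∧ ∃ u v, p.2 = some u ∧ q.2 = some v ∧ G.Adj u v))

/-- `[I, U] = { (i, v) : i ∈ I, v ∈ U }` inside `R_m(G)`. -/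
def box {m : ℕ} (I : Set (Fin m)) (U : Set V) : Set (Fin m × Option V) :=
  {p | p.1 ∈ I ∧ ∃ v ∈ U, p.2 = some v}

/-- Index of the first vertex in the enumeration `μ` satisfying `P`. -/
noncomputable def firstIdx {N : ℕ} {W : Type*} (μ : Fin N ≃ W) (P : W → Prop) : ℕ :=
  sInf {ℓ : ℕ | ∃ h : ℓ < N, P (μ ⟨ℓ, h⟩)}

/-- The cycle `C_n`: `v_j ~ v_{j'}` iff `|j - j'| ∈ {1, n-1}`. -/
def cyc (n : ℕ) : SimpleGraph (Fin n) :=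
  SimpleGraph.fromRel (fun a b => (b : ℕ) - (a : ℕ) = 1 ∨ (b : ℕ) - (a : ℕ) = n - 1)

/-- The Mycielskian of a graph. -/
def mycielskian (G : SimpleGraph V) : SimpleGraph (Option (V ⊕ V)) :=
  SimpleGraph.fromRel (fun a b =>
    match a, b with
    | some (Sum.inl u), some (Sum.inl v) => G.Adj u v
    | some (Sum.inr u), some (Sum.inl v) => G.Adj u v
    | none, some (Sum.inr _) => True
    | _, _ => False)

/-- Vertex types and graphs of the Mycielski family: `MycS 2` is a single edge. -/
def MycS : ℕ → Σ W : Type, SimpleGraph W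
  | 0 => ⟨Empty, ⊥⟩
  | 1 => ⟨Empty, ⊥⟩
  | 2 => ⟨Fin 2, ⊤⟩
  | (n + 3) => ⟨Option ((MycS (n + 2)).1 ⊕ (MycS (n + 2)).1), mycielskian (MycS (n + 2)).2⟩

/-- The vertex type of the `k`-Mycielski graph. -/
def MycV (k : ℕ) : Type := (MycS k).1

/-- The `k`-Mycielski graph `M_k`. -/
def Myc (k : ℕ) : SimpleGraph (MycV k) := (MycS k).2

section AuxBasic

lemma fin2_eq {a b c : Fin 2} (h1 : a ≠ c) (h2 : b ≠ c) : a = b := by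
  revert a b c; decide

lemma fin2_ne {a b c : Fin 2} (h1 : a ≠ b) (h2 : c ≠ a) : c = b := by
  revert a b c; decide

lemma fin_succ_val {n : ℕ} [NeZero n] (hn : 2 ≤ n) (a : Fin n) :
    ((a + 1 : Fin n).val = a.val + 1 ∧ a.val + 1 < n) ∨
      ((a + 1 : Fin n).val = 0 ∧ a.val = n - 1) := by
  have h1 : (1 : Fin n).val = 1 := by
    rw [Fin.val_one']; exact Nat.mod_eq_of_lt (by omega)
  have ha := a.isLt
  rcases Nat.lt_or_ge (a.val + 1) n with h | h
  · left
    refine ⟨?_, h⟩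
    rw [Fin.add_def]
    simp only [h1]
    exact Nat.mod_eq_of_lt h
  · right
    have he : a.val + 1 = n := by omega
    constructor
    · rw [Fin.add_def]; simp only [h1, he, Nat.mod_self]
    · omega

lemma cyc_adj {n : ℕ} [NeZero n] (hn : 5 ≤ n) {a b : Fin n} :
    (cyc n).Adj a b ↔ (b = a + 1 ∨ a = b + 1) := by
  have ha := a.isLt; have hb := b.isLt
  have hva : b = a + 1 ↔ (b.val = a.val + 1 ∨ (a.val = n - 1 ∧ b.val = 0)) := by
    rw [Fin.ext_iff]
    rcases fin_succ_val (by omega) a with ⟨h2, h3⟩ | ⟨h2, h3⟩ <;> rw [h2] <;> omega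
  have hvb : a = b + 1 ↔ (a.val = b.val + 1 ∨ (b.val = n - 1 ∧ a.val = 0)) := by
    rw [Fin.ext_iff]
    rcases fin_succ_val (by omega) b with ⟨h2, h3⟩ | ⟨h2, h3⟩ <;> rw [h2] <;> omega
  unfold cyc
  rw [SimpleGraph.fromRel_adj, hva, hvb]
  constructor
  · rintro ⟨hne, h⟩
    have hne' : a.val ≠ b.val := fun h => hne (Fin.ext h)
    omega
  · intro h
    have hne' : a.val ≠ b.val := by omega
    exact ⟨fun he => hne' (by rw [he]), by omega⟩

lemma cyc_adj_succ {n : ℕ} [NeZero n] (hn : 5 ≤ n) (a : Fin n) : (cyc n).Adj a (a + 1) :=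
  (cyc_adj hn).2 (Or.inl rfl)

lemma fin_ne_add_two {n : ℕ} [NeZero n] (hn : 5 ≤ n) (a : Fin n) : a ≠ a + 1 + 1 := by
  intro h
  rw [Fin.ext_iff] at h
  rcases fin_succ_val (by omega) a with ⟨h2, h3⟩ | ⟨h2, h3⟩ <;>
    rcases fin_succ_val (by omega) (a + 1) with ⟨h4, h5⟩ | ⟨h4, h5⟩ <;> omega

open Fin.NatCast Fin.CommRing in
lemma no_alternation {n : ℕ} [NeZero n] (hodd : Odd n) (hn : 5 ≤ n) (H : Fin n → Bool)
    (hH : ∀ a, H (a + 1) = !H a) : False := by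
  have key : ∀ (k : ℕ) (a : Fin n), H (a + (k : Fin n)) = if Even k then H a else !H a := by
    intro k
    induction k with
    | zero => intro a; simp
    | succ k ih =>
      intro a
      have hcast : ((k + 1 : ℕ) : Fin n) = (k : Fin n) + 1 := by push_cast; ring
      rw [hcast, ← add_assoc, hH, ih a]
      by_cases h : Even k <;> simp [h, Nat.even_add_one]
  have h0 := key n 0
  rw [Fin.natCast_self, add_zero] at h0
  rw [if_neg (by simpa [Nat.not_even_iff_odd] using hodd)] at h0
  simp at h0

lemma exists_mono_vertex {n : ℕ} [NeZero n] (hodd : Odd n) (hn : 5 ≤ n) (f : Fin n → ℕ) :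
    ∃ b e w : Fin n, e ≠ w ∧ (cyc n).Adj e b ∧ (cyc n).Adj b w ∧ f e ≤ f b ∧ f b ≤ f w := by
  by_contra hc
  push_neg at hc
  apply no_alternation hodd hn (fun a => decide (f a < f (a + 1)))
  intro a
  have hne : a ≠ a + 1 + 1 := fin_ne_add_two hn a
  have h1 : (cyc n).Adj a (a + 1) := cyc_adj_succ hn a
  have h2 : (cyc n).Adj (a + 1) (a + 1 + 1) := cyc_adj_succ hn (a + 1)
  have c1 := hc (a + 1) a (a + 1 + 1) hne h1 h2
  have c2 := hc (a + 1) (a + 1 + 1) a hne.symm h2.symm h1.symm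
  show decide (f (a+1) < f (a+1+1)) = !decide (f a < f (a+1))
  by_cases hx : f a < f (a + 1)
  · have h3 := c1 (le_of_lt hx)
    simp only [hx, decide_true, Bool.not_true, decide_eq_false_iff_not]
    omega
  · by_cases hy : f (a + 1) < f (a + 1 + 1)
    · simp only [hx, hy, decide_true, decide_false, Bool.not_false]
    · exact absurd (c2 (by omega)) hx

lemma not_colorable_one {α : Type*} {Γ : SimpleGraph α} {x y : α} (h : Γ.Adj x y) :
    ¬ Γ.Colorable 1 := fun ⟨c⟩ => c.valid h (Subsingleton.elim _ _)

lemma sInf_colorable_eq_two {α : Type*} (Γ : SimpleGraph α) (h2 : Γ.Colorable 2)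
    (h1 : ¬ Γ.Colorable 1) : sInf {k | Γ.Colorable k} = 2 := by
  have hne : {k | Γ.Colorable k}.Nonempty := ⟨2, h2⟩
  have hmem := Nat.sInf_mem hne
  have hle : sInf {k | Γ.Colorable k} ≤ 2 := Nat.sInf_le h2
  by_contra hne2
  have hlt : sInf {k | Γ.Colorable k} ≤ 1 := by omega
  exact h1 (SimpleGraph.Colorable.mono hlt hmem)

end AuxBasic

section CycColor

lemma dist_step {n : ℕ} [NeZero n] (hn : 5 ≤ n) {u w w' : Fin n}
    (hwu : w ≠ u) (hwu' : w' ≠ u) (he : w' = w + 1) :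
    (if u.val ≤ w'.val then w'.val - u.val else w'.val + n - u.val) =
      (if u.val ≤ w.val then w.val - u.val else w.val + n - u.val) + 1 := by
  have h1 : w.val ≠ u.val := fun h => hwu (Fin.ext h)
  have h2 : w'.val ≠ u.val := fun h => hwu' (Fin.ext h)
  have hu2 := u.isLt
  have hw2 := w.isLt
  subst he
  rcases fin_succ_val (by omega : 2 ≤ n) w with ⟨ha, hb⟩ | ⟨ha, hb⟩ <;>
    rw [ha] at h2 ⊢ <;> split_ifs <;> omega

lemma cyc_induce_col2 {n : ℕ} [NeZero n] (hn : 5 ≤ n) (S : Set (Fin n)) {u : Fin n}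
    (hu : u ∉ S) : ((cyc n).induce S).Colorable 2 := by
  refine ⟨SimpleGraph.Coloring.mk
    (fun x => ⟨(if u.val ≤ x.1.val then x.1.val - u.val else x.1.val + n - u.val) % 2,
      Nat.mod_lt _ (by omega)⟩) ?_⟩
  intro x y hadj
  have hadj' : (cyc n).Adj x.1 y.1 := hadj
  have hxu : x.1 ≠ u := fun h => hu (h ▸ x.2)
  have hyu : y.1 ≠ u := fun h => hu (h ▸ y.2)
  rw [cyc_adj hn] at hadj'
  intro hcc
  have hv := congrArg Fin.val hcc
  simp only at hv
  rcases hadj' with h | h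
  · have := dist_step hn hxu hyu h
    omega
  · have := dist_step hn hyu hxu h
    omega

lemma chrom_cyc_eq_two {n : ℕ} [NeZero n] (hn : 5 ≤ n) (S : Set (Fin n)) {u x y : Fin n}
    (hu : u ∉ S) (hx : x ∈ S) (hy : y ∈ S) (hadj : (cyc n).Adj x y) :
    chrom (cyc n) S = 2 := by
  unfold chrom
  refine sInf_colorable_eq_two _ (cyc_induce_col2 hn S hu) ?_
  exact not_colorable_one (Γ := (cyc n).induce S) (x := ⟨x, hx⟩) (y := ⟨y, hy⟩) hadj

/-- The bag of the standard path decomposition of the cycle. -/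
def Bc (n : ℕ) (t : Fin (n - 2)) : Set (Fin n) :=
  {w : Fin n | w.val = 0 ∨ w.val = t.val + 1 ∨ w.val = t.val + 2}

lemma bc_spec {n : ℕ} [NeZero n] (hn : 5 ≤ n) (t : Fin (n - 2)) {x y : Fin n}
    (hx : x ∈ Bc n t) (hy : y ∈ Bc n t) (hadj : (cyc n).Adj x y) :
    (x.val = (if t.val + 3 = n then t.val + 2 else t.val + 1)) ↔
      ¬ (y.val = (if t.val + 3 = n then t.val + 2 else t.val + 1)) := by
  have ht := t.isLt
  have hxl := x.isLt; have hyl := y.isLt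
  rw [cyc_adj hn] at hadj
  have hv : (y.val = x.val + 1 ∨ (x.val = n - 1 ∧ y.val = 0)) ∨
      (x.val = y.val + 1 ∨ (y.val = n - 1 ∧ x.val = 0)) := by
    rcases hadj with h | h
    · rcases fin_succ_val (by omega : 2 ≤ n) x with ⟨ha, hb⟩ | ⟨ha, hb⟩ <;>
        rw [h, ha] <;> omega
    · rcases fin_succ_val (by omega : 2 ≤ n) y with ⟨ha, hb⟩ | ⟨ha, hb⟩ <;>
        rw [h, ha] <;> omega
  have hx' : x.val = 0 ∨ x.val = t.val + 1 ∨ x.val = t.val + 2 := hx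
  have hy' : y.val = 0 ∨ y.val = t.val + 1 ∨ y.val = t.val + 2 := hy
  have hn2 : 2 ≤ n - 2 := by omega
  split_ifs with hif <;> omega

lemma bc_decomp {n : ℕ} [NeZero n] (hn : 5 ≤ n) : IsPathDecomp (cyc n) (Bc n) := by
  have hedge_pair : ∀ x y : Fin n, (y.val = x.val + 1 ∨ (x.val = n - 1 ∧ y.val = 0)) →
      ∃ t : Fin (n - 2), x ∈ Bc n t ∧ y ∈ Bc n t := by
    intro x y h
    rcases h with h | ⟨h1, h2⟩
    · by_cases hx0 : x.val = 0
      · exact ⟨⟨0, by omega⟩, Or.inl hx0, Or.inr (Or.inl (show y.val = 0 + 1 by omega))⟩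
      · have hxle : x.val ≤ n - 2 := by have := y.isLt; omega
        exact ⟨⟨x.val - 1, by omega⟩, Or.inr (Or.inl (show x.val = (x.val - 1) + 1 by omega)),
          Or.inr (Or.inr (show y.val = (x.val - 1) + 2 by omega))⟩
    · exact ⟨⟨n - 3, by omega⟩, Or.inr (Or.inr (show x.val = (n - 3) + 2 by omega)), Or.inl h2⟩
  refine ⟨?_, ?_, ?_⟩
  · intro v
    by_cases h0 : v.val = 0
    · exact ⟨⟨0, by omega⟩, Or.inl h0⟩
    · by_cases h1 : v.val ≤ n - 2
      · exact ⟨⟨v.val - 1, by omega⟩, Or.inr (Or.inl (show v.val = (v.val - 1) + 1 by omega))⟩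
      · have := v.isLt
        exact ⟨⟨n - 3, by omega⟩, Or.inr (Or.inr (show v.val = (n - 3) + 2 by omega))⟩
  · intro u v hadj
    rw [cyc_adj hn] at hadj
    have hul := u.isLt; have hvl := v.isLt
    rcases hadj with h | h
    · apply hedge_pair
      rcases fin_succ_val (by omega : 2 ≤ n) u with ⟨ha, hb⟩ | ⟨ha, hb⟩ <;>
        rw [h, ha] <;> omega
    · obtain ⟨t, h1, h2⟩ := hedge_pair v u (by
        rcases fin_succ_val (by omega : 2 ≤ n) v with ⟨ha, hb⟩ | ⟨ha, hb⟩ <;>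
          rw [h, ha] <;> omega)
      exact ⟨t, h2, h1⟩
  · intro v t1 t2 t3 h12 h23 h1 h3
    have h12' : t1.val ≤ t2.val := h12
    have h23' : t2.val ≤ t3.val := h23
    have h1' : v.val = 0 ∨ v.val = t1.val + 1 ∨ v.val = t1.val + 2 := h1
    have h3' : v.val = 0 ∨ v.val = t3.val + 1 ∨ v.val = t3.val + 2 := h3
    show v.val = 0 ∨ v.val = t2.val + 1 ∨ v.val = t2.val + 2
    omega

lemma pathChromatic_cyc {n : ℕ} [NeZero n] (hn : 5 ≤ n) : pathChromatic (cyc n) = 2 := by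
  classical
  set S : Set ℕ := {k | ∃ (s : ℕ) (B : Fin s → Set (Fin n)), IsPathDecomp (cyc n) B ∧
    ∀ t, ((cyc n).induce (B t)).Colorable k} with hS
  have hdec := bc_decomp hn
  have h2 : 2 ∈ S := by
    refine ⟨n - 2, Bc n, hdec, ?_⟩
    intro t
    refine ⟨SimpleGraph.Coloring.mk
      (fun x => if x.1.val = (if t.val + 3 = n then t.val + 2 else t.val + 1)
        then 1 else 0) ?_⟩
    intro x y hadj
    have hadj' : (cyc n).Adj x.1 y.1 := hadj
    have hiff := bc_spec hn t x.2 y.2 hadj'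
    set sp := (if t.val + 3 = n then t.val + 2 else t.val + 1) with hsp
    show (if x.1.val = sp then (1 : Fin 2) else 0) ≠ (if y.1.val = sp then (1 : Fin 2) else 0)
    split_ifs with hp hq hq
    · exact absurd hq (hiff.1 hp)
    · exact one_ne_zero
    · exact zero_ne_one
    · exact absurd (hiff.2 hq) hp
  have h1notin : (1 : ℕ) ∉ S := by
    rintro ⟨s, B, hd, hc⟩
    have hadj : (cyc n).Adj 0 1 := (cyc_adj hn).2 (Or.inl (zero_add 1).symm)
    obtain ⟨t, hx, hy⟩ := hd.2.1 _ _ hadj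
    exact not_colorable_one (Γ := (cyc n).induce (B t)) (x := ⟨0, hx⟩) (y := ⟨1, hy⟩)
      hadj (hc t)
  have hne : S.Nonempty := ⟨2, h2⟩
  have hmem := Nat.sInf_mem hne
  have hle : sInf S ≤ 2 := Nat.sInf_le h2
  show sInf S = 2
  by_contra hne2
  have hlt : sInf S ≤ 1 := by omega
  obtain ⟨s, B, hd, hc⟩ := hmem
  exact h1notin ⟨s, B, hd, fun t => (hc t).mono hlt⟩

end CycColor

section Part1

lemma no_special {n : ℕ} (hodd : Odd n) (hn : 5 ≤ n) (σ : Fin n ≃ Fin n) :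
    ¬ IsSpecial (cyc n) σ := by
  haveI : NeZero n := ⟨by omega⟩
  rintro ⟨-, hsp⟩
  obtain ⟨b, e, w, hew, heb, hbw, hfe, hfb⟩ :=
    exists_mono_vertex hodd hn (fun a => (σ.symm a).val)
  set i := σ.symm b with hi
  have heb' : e ≠ b := (cyc n).ne_of_adj heb
  have hbw' : b ≠ w := (cyc n).ne_of_adj hbw
  have hbi : b = σ i := (σ.apply_symm_apply b).symm
  have hlt : σ.symm e < i := by
    rw [Fin.lt_def]
    have hne : (σ.symm e).val ≠ i.val := by
      intro h
      exact heb' (by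
        have : σ.symm e = i := Fin.ext h
        have := congrArg σ this
        rwa [σ.apply_symm_apply, σ.apply_symm_apply] at this)
    omega
  have hb_mem : b ∈ bagX (cyc n) σ i := by
    constructor
    · exact Or.inl ⟨i, le_refl i, hbi⟩
    · rintro ⟨j, hj, hbj⟩
      have : i = j := by rw [hi, hbj, σ.symm_apply_apply]
      rw [this] at hj
      exact absurd hj (lt_irrefl j)
  have hw_mem : w ∈ bagX (cyc n) σ i := by
    constructor
    · exact Or.inr ⟨b, ⟨i, le_refl i, hbi⟩, hbw⟩
    · rintro ⟨j, hj, hwj⟩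
      have hja : j = σ.symm w := by rw [hwj, σ.symm_apply_apply]
      rw [Fin.lt_def] at hj
      rw [hja] at hj
      have hne : (σ.symm w).val ≠ i.val := by
        intro h
        exact hbw' (by
          have : σ.symm w = i := Fin.ext h
          have := congrArg σ this
          rw [σ.apply_symm_apply, σ.apply_symm_apply] at this
          exact this.symm)
      omega
  have h0_nin : σ 0 ∉ bagX (cyc n) σ i := by
    intro hmem
    refine hmem.2 ⟨0, ?_, rfl⟩
    rw [Fin.lt_def]
    have h0 : (0 : Fin n).val = 0 := rfl
    rw [Fin.lt_def] at hlt
    omega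
  have hchrom : chrom (cyc n) (bagX (cyc n) σ i) = 2 :=
    chrom_cyc_eq_two hn _ h0_nin hb_mem hw_mem hbw
  have happ := hsp i (by rw [hchrom, pathChromatic_cyc hn]) (σ.symm e) hlt
  rw [σ.apply_symm_apply, ← hbi] at happ
  exact happ heb

end Part1

section RmBasic

lemma rm_adj_none {G : SimpleGraph V} {m : ℕ} (i : Fin m) (u : V) :
    (Rm G m).Adj (i, none) (i, some u) := by
  unfold Rm
  rw [SimpleGraph.fromRel_adj]
  exact ⟨by simp, Or.inl (Or.inl ⟨rfl, rfl⟩)⟩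

lemma rm_adj_cross {G : SimpleGraph V} {m : ℕ} {i j : Fin m} (hij : i ≠ j) {u v : V}
    (h : G.Adj u v) : (Rm G m).Adj (i, some u) (j, some v) := by
  unfold Rm
  rw [SimpleGraph.fromRel_adj]
  exact ⟨fun hh => hij (congrArg Prod.fst hh), Or.inl (Or.inr ⟨hij, u, v, rfl, rfl, h⟩)⟩

lemma rm_adj_elim {G : SimpleGraph V} {m : ℕ} {p q : Fin m × Option V}
    (h : (Rm G m).Adj p q) :
    (p.1 = q.1 ∧ (p.2 = none ∨ q.2 = none) ∧ p ≠ q) ∨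
      (p.1 ≠ q.1 ∧ ∃ u v, p.2 = some u ∧ q.2 = some v ∧ G.Adj u v) := by
  unfold Rm at h
  rw [SimpleGraph.fromRel_adj] at h
  obtain ⟨hne, h⟩ := h
  rcases h with (⟨h1, h2⟩ | ⟨h1, u, v, h2, h3, h4⟩) | (⟨h1, h2⟩ | ⟨h1, u, v, h2, h3, h4⟩)
  · exact Or.inl ⟨h1, Or.inl h2, hne⟩
  · exact Or.inr ⟨h1, u, v, h2, h3, h4⟩
  · exact Or.inl ⟨h1.symm, Or.inr h2, hne⟩
  · exact Or.inr ⟨Ne.symm h1, v, u, h3, h2, h4.symm⟩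

end RmBasic

section RmUpper

lemma rm_upper {n m : ℕ} [NeZero n] (hn : 5 ≤ n) :
    ∃ (s : ℕ) (B : Fin s → Set (Fin m × Option (Fin n))),
      IsPathDecomp (Rm (cyc n) m) B ∧
        ∀ t, ((Rm (cyc n) m).induce (B t)).Colorable 3 := by
  classical
  refine ⟨n - 2, fun t => {p | p.2 = none ∨ ∃ v, p.2 = some v ∧ v ∈ Bc n t},
    ⟨?_, ?_, ?_⟩, ?_⟩
  · rintro ⟨i, _ | v⟩
    · exact ⟨⟨0, by omega⟩, Or.inl rfl⟩
    · obtain ⟨t, ht⟩ := (bc_decomp hn).1 v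
      exact ⟨t, Or.inr ⟨v, rfl, ht⟩⟩
  · intro p q hadj
    rcases rm_adj_elim hadj with ⟨h1, h2, h3⟩ | ⟨h1, u, v, h2, h3, h4⟩
    · rcases h2 with h2 | h2
      · rcases hq : q.2 with _ | v
        · exact ⟨⟨0, by omega⟩, Or.inl h2, Or.inl hq⟩
        · obtain ⟨t, ht⟩ := (bc_decomp hn).1 v
          exact ⟨t, Or.inl h2, Or.inr ⟨v, hq, ht⟩⟩
      · rcases hp : p.2 with _ | v
        · exact ⟨⟨0, by omega⟩, Or.inl hp, Or.inl h2⟩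
        · obtain ⟨t, ht⟩ := (bc_decomp hn).1 v
          exact ⟨t, Or.inr ⟨v, hp, ht⟩, Or.inl h2⟩
    · obtain ⟨t, htu, htv⟩ := (bc_decomp hn).2.1 u v h4
      exact ⟨t, Or.inr ⟨u, h2, htu⟩, Or.inr ⟨v, h3, htv⟩⟩
  · intro p t1 t2 t3 h12 h23 h1 h3
    rcases h1 with h1 | ⟨v, hv, h1⟩
    · exact Or.inl h1
    · rcases h3 with h3 | ⟨v', hv', h3⟩
      · exact Or.inl h3
      · have hvv : v' = v := by
          rw [hv] at hv'
          exact (Option.some_inj.mp hv').symm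
        rw [hvv] at h3
        exact Or.inr ⟨v, hv, (bc_decomp hn).2.2 v t1 t2 t3 h12 h23 h1 h3⟩
  · intro t
    refine ⟨SimpleGraph.Coloring.mk (fun x =>
      (match x.1.2 with
        | none => (2 : Fin 3)
        | some v => if v.val = (if t.val + 3 = n then t.val + 2 else t.val + 1)
            then 1 else 0)) ?_⟩
    rintro ⟨⟨xi, xo⟩, hxm⟩ ⟨⟨yi, yo⟩, hym⟩ hadj
    have hadj' : (Rm (cyc n) m).Adj (xi, xo) (yi, yo) := hadj
    rcases rm_adj_elim hadj' with ⟨h1, h2, h3⟩ | ⟨h1, u, v, h2, h3, h4⟩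
    · simp only at h1 h2
      rcases h2 with h2 | h2
      · subst h2
        rcases yo with _ | v
        · exact absurd (by rw [h1]) h3
        · dsimp only
          split_ifs <;> decide
      · subst h2
        rcases xo with _ | v
        · exact absurd (by rw [h1]) h3
        · dsimp only
          split_ifs <;> decide
    · simp only at h2 h3
      subst h2; subst h3
      have hu : u ∈ Bc n t := by
        rcases hxm with h | ⟨v', hv', hm⟩
        · exact absurd h (by simp)
        · rwa [show v' = u from Option.some_inj.mp hv'.symm] at hm
      have hv : v ∈ Bc n t := by
        rcases hym with h | ⟨v', hv', hm⟩
        · exact absurd h (by simp)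
        · rwa [show v' = v from Option.some_inj.mp hv'.symm] at hm
      have hiff := bc_spec hn t hu hv h4
      dsimp only
      set sp := (if t.val + 3 = n then t.val + 2 else t.val + 1) with hsp
      split_ifs with hp hq hq
      · exact absurd hq (hiff.1 hp)
      · decide
      · decide
      · exact absurd (hiff.2 hq) hp

end RmUpper

section RmLower

lemma rm_lower {n m : ℕ} (hodd : Odd n) (hn : 5 ≤ n) (hm : n + 4 ≤ m)
    {s : ℕ} (W : Fin s → Set (Fin m × Option (Fin n)))
    (hdec : IsPathDecomp (Rm (cyc n) m) W)
    (hcol : ∀ t, ((Rm (cyc n) m).induce (W t)).Colorable 2) : False := by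
  classical
  haveI : NeZero n := ⟨by omega⟩
  haveI : Nonempty (Fin m) := ⟨⟨0, by omega⟩⟩
  obtain ⟨hcov, hedge, hconv⟩ := hdec
  set Occ : Fin m × Option (Fin n) → Finset (Fin s) :=
    fun p => Finset.univ.filter (fun t => p ∈ W t) with hOcc
  have hOccNe : ∀ p, (Occ p).Nonempty := by
    intro p
    obtain ⟨t, ht⟩ := hcov p
    exact ⟨t, by simp [hOcc, ht]⟩
  set L : Fin m × Option (Fin n) → Fin s := fun p => (Occ p).min' (hOccNe p) with hL
  set R : Fin m × Option (Fin n) → Fin s := fun p => (Occ p).max' (hOccNe p) with hR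
  have hLmemW : ∀ p, p ∈ W (L p) := by
    intro p
    have := (Occ p).min'_mem (hOccNe p)
    simp [hOcc, Finset.mem_filter] at this
    exact this
  have hRmemW : ∀ p, p ∈ W (R p) := by
    intro p
    have := (Occ p).max'_mem (hOccNe p)
    simp [hOcc, Finset.mem_filter] at this
    exact this
  have hmemW : ∀ p t, L p ≤ t → t ≤ R p → p ∈ W t := by
    intro p t h1 h2
    exact hconv p (L p) t (R p) h1 h2 (hLmemW p) (hRmemW p)
  have hLle : ∀ p t, p ∈ W t → L p ≤ t := by
    intro p t ht
    exact Finset.min'_le _ _ (by simp [hOcc, Finset.mem_filter, ht])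
  have hleR : ∀ p t, p ∈ W t → t ≤ R p := by
    intro p t ht
    exact Finset.le_max' _ _ (by simp [hOcc, Finset.mem_filter, ht])
  -- latest arrival time of a vertex over all columns
  have hex : ∀ u : Fin n, ∃ iu : Fin m, ∀ i, L (i, some u) ≤ L (iu, some u) := by
    intro u
    obtain ⟨iu, _, hiu⟩ := Finset.exists_max_image Finset.univ
      (fun i : Fin m => L (i, some u)) Finset.univ_nonempty
    exact ⟨iu, fun i => hiu i (Finset.mem_univ i)⟩
  choose colMax hcolMax using hex
  set z : Fin n → Fin s := fun u => L (colMax u, some u) with hz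
  have hzle : ∀ u i, L (i, some u) ≤ z u := fun u i => hcolMax u i
  have hzmem : ∀ u, ∃ i, L (i, some u) = z u := fun u => ⟨colMax u, rfl⟩
  -- monotone vertex
  obtain ⟨b, e, w, hew, heb, hbw, hfe, hfb⟩ :=
    exists_mono_vertex hodd hn (fun u => (z u).val)
  have hze : z e ≤ z b := hfe
  have hzw : z b ≤ z w := hfb
  obtain ⟨i1, hi1⟩ := hzmem b
  obtain ⟨i2, hi2⟩ := hzmem w
  -- persistence of copies of e and b past time z b
  have hRe : ∀ i, i ≠ i1 → z b ≤ R (i, some e) := by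
    intro i hi
    obtain ⟨t, h1, h2⟩ := hedge _ _ (rm_adj_cross hi heb)
    have ht1 : L (i1, some b) ≤ t := hLle _ _ h2
    rw [hi1] at ht1
    exact le_trans ht1 (hleR _ _ h1)
  have hRb : ∀ i, i ≠ i2 → z b ≤ R (i, some b) := by
    intro i hi
    obtain ⟨t, h1, h2⟩ := hedge _ _ (rm_adj_cross hi hbw)
    have ht1 : L (i2, some w) ≤ t := hLle _ _ h2
    rw [hi2] at ht1
    exact le_trans hzw (le_trans ht1 (hleR _ _ h1))
  have hpresE : ∀ i, i ≠ i1 → (i, some e) ∈ W (z b) :=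
    fun i hi => hmemW _ _ (le_trans (hzle e i) hze) (hRe i hi)
  have hpresB : ∀ i, i ≠ i2 → (i, some b) ∈ W (z b) :=
    fun i hi => hmemW _ _ (hzle b i) (hRb i hi)
  -- no v₀ of other columns at time z b
  have hnone : ∀ i, i ≠ i1 → i ≠ i2 → (i, none) ∉ W (z b) := by
    intro i hi1 hi2 hmemN
    obtain ⟨κ⟩ := hcol (z b)
    have hbig : 1 < (Finset.univ \ ({i, i1, i2} : Finset (Fin m))).card := by
      have h3 : ({i, i1, i2} : Finset (Fin m)).card ≤ 3 := by
        apply (Finset.card_insert_le _ _).trans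
        apply Nat.succ_le_succ
        apply (Finset.card_insert_le _ _).trans
        simp
      rw [Finset.card_sdiff_of_subset (Finset.subset_univ _), Finset.card_univ, Fintype.card_fin]
      omega
    obtain ⟨j, hj, k, hk, hjk⟩ := Finset.one_lt_card.mp hbig
    simp only [Finset.mem_sdiff, Finset.mem_univ, true_and, Finset.mem_insert,
      Finset.mem_singleton, not_or] at hj hk
    obtain ⟨hji, hji1, hji2⟩ := hj
    obtain ⟨hki, hki1, hki2⟩ := hk
    have a1 : κ ⟨(i, some e), hpresE i hi1⟩ ≠ κ ⟨(j, some b), hpresB j hji2⟩ :=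
      κ.valid (rm_adj_cross (Ne.symm hji) heb)
    have a2 : κ ⟨(k, some e), hpresE k hki1⟩ ≠ κ ⟨(j, some b), hpresB j hji2⟩ :=
      κ.valid (rm_adj_cross (fun h => hjk h.symm) heb)
    have a3 : κ ⟨(k, some e), hpresE k hki1⟩ ≠ κ ⟨(i, some b), hpresB i hi2⟩ :=
      κ.valid (rm_adj_cross hki heb)
    have hc23 : κ ⟨(i, some b), hpresB i hi2⟩ = κ ⟨(j, some b), hpresB j hji2⟩ :=
      fin2_eq a3.symm a2.symm
    have a4 : κ ⟨(i, some e), hpresE i hi1⟩ ≠ κ ⟨(i, some b), hpresB i hi2⟩ := by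
      rw [hc23]; exact a1
    have b1 : κ ⟨(i, some e), hpresE i hi1⟩ ≠ κ ⟨(i, none), hmemN⟩ :=
      κ.valid (rm_adj_none i e).symm
    have b2 : κ ⟨(i, some b), hpresB i hi2⟩ ≠ κ ⟨(i, none), hmemN⟩ :=
      κ.valid (rm_adj_none i b).symm
    exact a4 (fin2_eq b1 b2)
  -- past / future split
  set C' : Finset (Fin m) := Finset.univ.filter (fun i => i ≠ i1 ∧ i ≠ i2) with hC'
  have hCmem : ∀ i ∈ C', i ≠ i1 ∧ i ≠ i2 := by
    intro i hi
    simpa [hC'] using hi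
  have hsplit : ∀ i ∈ C', R (i, none) < z b ∨ z b < L (i, none) := by
    intro i hi
    obtain ⟨hia, hib⟩ := hCmem i hi
    by_contra hcon
    push_neg at hcon
    exact hnone i hia hib (hmemW _ _ hcon.2 hcon.1)
  set P : Finset (Fin m) := C'.filter (fun i => R (i, none) < z b) with hP
  set F : Finset (Fin m) := C'.filter (fun i => z b < L (i, none)) with hF
  -- the generic 5-cycle contradiction
  have cycle5 : ∀ (th : Fin s) (f1 j k : Fin m), j ≠ f1 → k ≠ f1 → j ≠ k →
      (f1, none) ∈ W th → (f1, some e) ∈ W th → (f1, some b) ∈ W th →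
      (j, some b) ∈ W th → (k, some e) ∈ W th → False := by
    intro th f1 j k hjf hkf hjk m0 m1 m2 m3 m4
    obtain ⟨κ⟩ := hcol th
    have c1 : κ ⟨(f1, some e), m1⟩ ≠ κ ⟨(f1, none), m0⟩ := κ.valid (rm_adj_none f1 e).symm
    have c2 : κ ⟨(f1, some b), m2⟩ ≠ κ ⟨(f1, none), m0⟩ := κ.valid (rm_adj_none f1 b).symm
    have c12 : κ ⟨(f1, some e), m1⟩ = κ ⟨(f1, some b), m2⟩ := fin2_eq c1 c2
    have c3 : κ ⟨(j, some b), m3⟩ ≠ κ ⟨(f1, some e), m1⟩ :=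
      κ.valid (rm_adj_cross hjf heb.symm)
    have c3' : κ ⟨(j, some b), m3⟩ = κ ⟨(f1, none), m0⟩ := fin2_eq c3 c1.symm
    have c4 : κ ⟨(k, some e), m4⟩ ≠ κ ⟨(j, some b), m3⟩ :=
      κ.valid (rm_adj_cross hjk.symm heb)
    have c4' : κ ⟨(k, some e), m4⟩ ≠ κ ⟨(f1, none), m0⟩ := by rw [← c3']; exact c4
    have c5 : κ ⟨(k, some e), m4⟩ = κ ⟨(f1, some e), m1⟩ := fin2_eq c4' c1
    have c6 : κ ⟨(k, some e), m4⟩ ≠ κ ⟨(f1, some b), m2⟩ :=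
      κ.valid (rm_adj_cross hkf heb)
    rw [c5, c12] at c6
    exact c6 rfl
  -- future columns
  have hFsmall : F.card ≤ 2 := by
    by_contra hFc
    push_neg at hFc
    obtain ⟨f1, hf1F, hf1min⟩ := Finset.exists_min_image F (fun i => L (i, none))
      (Finset.card_pos.mp (by omega))
    have hzth : z b < L (f1, none) := (Finset.mem_filter.mp hf1F).2
    have hpres : ∀ j ∈ F, (j, some e) ∈ W (L (f1, none)) ∧ (j, some b) ∈ W (L (f1, none)) := by
      intro j hjF
      have hjmin := hf1min j hjF
      have hre : L (f1, none) ≤ R (j, some e) := by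
        obtain ⟨t, h1, h2⟩ := hedge _ _ ((rm_adj_none j e).symm)
        exact le_trans hjmin (le_trans (hLle _ _ h2) (hleR _ _ h1))
      have hrb : L (f1, none) ≤ R (j, some b) := by
        obtain ⟨t, h1, h2⟩ := hedge _ _ ((rm_adj_none j b).symm)
        exact le_trans hjmin (le_trans (hLle _ _ h2) (hleR _ _ h1))
      constructor
      · exact hmemW _ _ (le_trans (hzle e j) (le_trans hze (le_of_lt hzth))) hre
      · exact hmemW _ _ (le_trans (hzle b j) (le_of_lt hzth)) hrb
    obtain ⟨j, hj, k, hk, hjk⟩ := Finset.one_lt_card.mp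
      (show 1 < (F.erase f1).card by
        have := Finset.card_erase_of_mem hf1F
        omega)
    have hjF := Finset.mem_of_mem_erase hj
    have hkF := Finset.mem_of_mem_erase hk
    exact cycle5 (L (f1, none)) f1 j k (Finset.ne_of_mem_erase hj)
      (Finset.ne_of_mem_erase hk) hjk (hLmemW _) (hpres f1 hf1F).1 (hpres f1 hf1F).2
      (hpres j hjF).2 (hpres k hkF).1
  -- past columns
  have hPsmall : P.card ≤ 2 := by
    by_contra hPc
    push_neg at hPc
    obtain ⟨p1, hp1P, hp1max⟩ := Finset.exists_max_image P (fun i => R (i, none))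
      (Finset.card_pos.mp (by omega))
    have hzth : R (p1, none) < z b := (Finset.mem_filter.mp hp1P).2
    have hpres : ∀ j ∈ P, (j, some e) ∈ W (R (p1, none)) ∧ (j, some b) ∈ W (R (p1, none)) := by
      intro j hjP
      have hjmax := hp1max j hjP
      obtain ⟨hja, hjb⟩ := hCmem j (Finset.mem_of_mem_filter _ hjP)
      have hle : L (j, some e) ≤ R (p1, none) := by
        obtain ⟨t, h1, h2⟩ := hedge _ _ ((rm_adj_none j e).symm)
        exact le_trans (hLle _ _ h1) (le_trans (hleR _ _ h2) hjmax)
      have hlb : L (j, some b) ≤ R (p1, none) := by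
        obtain ⟨t, h1, h2⟩ := hedge _ _ ((rm_adj_none j b).symm)
        exact le_trans (hLle _ _ h1) (le_trans (hleR _ _ h2) hjmax)
      constructor
      · exact hmemW _ _ hle (le_trans (le_of_lt hzth) (hRe j hja))
      · exact hmemW _ _ hlb (le_trans (le_of_lt hzth) (hRb j hjb))
    obtain ⟨j, hj, k, hk, hjk⟩ := Finset.one_lt_card.mp
      (show 1 < (P.erase p1).card by
        have := Finset.card_erase_of_mem hp1P
        omega)
    have hjP := Finset.mem_of_mem_erase hj
    have hkP := Finset.mem_of_mem_erase hk
    exact cycle5 (R (p1, none)) p1 j k (Finset.ne_of_mem_erase hj)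
      (Finset.ne_of_mem_erase hk) hjk (hRmemW _) (hpres p1 hp1P).1 (hpres p1 hp1P).2
      (hpres j hjP).2 (hpres k hkP).1
  -- counting
  have hsub : C' ⊆ P ∪ F := by
    intro i hi
    rcases hsplit i hi with h | h
    · exact Finset.mem_union_left _ (Finset.mem_filter.mpr ⟨hi, h⟩)
    · exact Finset.mem_union_right _ (Finset.mem_filter.mpr ⟨hi, h⟩)
  have hCcard : m - 2 ≤ C'.card := by
    have hsub2 : (Finset.univ \ ({i1, i2} : Finset (Fin m))) ⊆ C' := by
      intro x hx
      simp only [Finset.mem_sdiff, Finset.mem_univ, true_and, Finset.mem_insert,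
        Finset.mem_singleton, not_or] at hx
      simp [hC', hx.1, hx.2]
    have hcard2 : ({i1, i2} : Finset (Fin m)).card ≤ 2 := by
      apply (Finset.card_insert_le _ _).trans
      simp
    have := Finset.card_le_card hsub2
    rw [Finset.card_sdiff_of_subset (Finset.subset_univ _), Finset.card_univ, Fintype.card_fin] at this
    omega
  have := Finset.card_le_card hsub
  have hPF := Finset.card_union_le P F
  omega

end RmLower

/-- Lemma 4: for odd `n ≥ 5`, no enumeration of `C_n` is special; consequently for all
`m ≥ n + 4`, `χ_P(R_m(C_n)) = 3`. -/
theorem stmt_12 (n : ℕ) (hodd : Odd n) (hn : 5 ≤ n) :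
    (∀ σ : Fin n ≃ Fin n, ¬ IsSpecial (cyc n) σ) ∧
    ∀ m : ℕ, n + 4 ≤ m → pathChromatic (Rm (cyc n) m) = 3 := by
  haveI : NeZero n := ⟨by omega⟩
  refine ⟨fun σ => no_special hodd hn σ, ?_⟩
  intro m hm
  classical
  set S : Set ℕ := {k | ∃ (s : ℕ) (B : Fin s → Set (Fin m × Option (Fin n))),
    IsPathDecomp (Rm (cyc n) m) B ∧ ∀ t, ((Rm (cyc n) m).induce (B t)).Colorable k} with hS
  have h3 : 3 ∈ S := by
    obtain ⟨s, B, hd, hc⟩ := rm_upper (m := m) hn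
    exact ⟨s, B, hd, hc⟩
  have h2 : 2 ∉ S := by
    rintro ⟨s, B, hd, hc⟩
    exact rm_lower hodd hn hm B hd hc
  have hne : S.Nonempty := ⟨3, h3⟩
  have hmem := Nat.sInf_mem hne
  have hle : sInf S ≤ 3 := Nat.sInf_le h3
  show sInf S = 3
  by_contra hne3
  have hlt : sInf S ≤ 2 := by omega
  obtain ⟨s, B, hd, hc⟩ := hmem
  exact h2 ⟨s, B, hd, fun t => (hc t).mono hlt⟩
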